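/- Let π ∈ N_n. Then π ∈ N'_n (i.e., π⁻¹ avoids 321 as a consecutive pattern) if and only if the word φ(π) avoids the words bba, bbb, cba, and cbb as blocks of consecutive letters. -/

import Mathlib

/-- The one-line notation of a permutation `π` of `{1,…,n}`, read as a function on 0-based
positions: `permWord π j = π_{j+1}` (values are 1-based; out-of-range positions give `0`). -/
def permWord {n : ℕ} (π : Equiv.Perm (Fin n)) (j : ℕ) : ℕ :=
  if h : j < n then ((π ⟨j, h⟩ : Fin n) : ℕ) + 1 else 0

/-- `π` contains `σ` as a consecutive pattern: some window of consecutive letters of `π`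
has standardization `σ`, i.e. is order-isomorphic to the one-line word of `σ`. -/
def ContainsPat {n m : ℕ} (π : Equiv.Perm (Fin n)) (σ : Equiv.Perm (Fin m)) : Prop :=
  ∃ i : ℕ, i + m ≤ n ∧ ∀ j k : Fin m,
    (permWord π (i + (j : ℕ)) < permWord π (i + (k : ℕ)) ↔ permWord σ j < permWord σ k)

/-- The number of peaks of `π`: 1-based indices `i` with `2 ≤ i ≤ n-1` and
`π_{i-1} < π_i > π_{i+1}`. -/
def pkCount {n : ℕ} (π : Equiv.Perm (Fin n)) : ℕ :=
  ((Finset.Icc 2 (n - 1)).filter fun i =>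
    permWord π (i - 2) < permWord π (i - 1) ∧ permWord π i < permWord π (i - 1)).card

/-- The number of left peaks of `π`: 1-based indices `i ∈ [n-1]` that are peaks,
or `i = 1` with `π_1 > π_2`. -/
def lpkCount {n : ℕ} (π : Equiv.Perm (Fin n)) : ℕ :=
  ((Finset.Icc 1 (n - 1)).filter fun i =>
    (2 ≤ i ∧ permWord π (i - 2) < permWord π (i - 1) ∧ permWord π i < permWord π (i - 1))
      ∨ (i = 1 ∧ permWord π 1 < permWord π 0)).card

/-- The number of peaks of `π⁻¹`. -/
def ipk {n : ℕ} (π : Equiv.Perm (Fin n)) : ℕ := pkCount π⁻¹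

/-- The number of left peaks of `π⁻¹`. -/
def ilpk {n : ℕ} (π : Equiv.Perm (Fin n)) : ℕ := lpkCount π⁻¹
/-- The three-letter alphabet `{a, b, c}`. -/
inductive ABC : Type
  | a : ABC
  | b : ABC
  | c : ABC
  deriving DecidableEq, Repr

open ABC

/-- Words matching one of the alternatives `c`, `bc`, `a⁺b`, `a⁺c` of the regular
expression `(c ∪ bc ∪ a⁺b ∪ a⁺c)`. -/
def Atom (u : List ABC) : Prop :=
  u = [c] ∨ u = [b, c] ∨
    ∃ i : ℕ, 1 ≤ i ∧ (u = List.replicate i a ++ [b] ∨ u = List.replicate i a ++ [c])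

/-- Membership in `W_n`: words of length `n` of the form `a^i c u a c^j` (with `i, j ≥ 0`)
avoiding the subwords (i.e. blocks of consecutive letters) `bba`, `bbb`, `cba`, `cbb`. -/
def Wmem (n : ℕ) (w : List ABC) : Prop :=
  w.length = n ∧
  (∃ (i j : ℕ) (u : List ABC),
      w = List.replicate i a ++ [c] ++ u ++ [a] ++ List.replicate j c) ∧
  ¬ [b, b, a] <:+: w ∧ ¬ [b, b, b] <:+: w ∧ ¬ [c, b, a] <:+: w ∧ ¬ [c, b, b] <:+: w

/-- `i` is a left peak of `π` (1-based): `i ∈ [n-1]` and either `i` is a peak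
(`2 ≤ i ≤ n-1` and `π_{i-1} < π_i > π_{i+1}`) or `i = 1` and `π_1 > π_2`. -/
def IsLeftPeak {n : ℕ} (π : Equiv.Perm (Fin n)) (i : ℕ) : Prop :=
  1 ≤ i ∧ i ≤ n - 1 ∧
    ((2 ≤ i ∧ permWord π (i - 2) < permWord π (i - 1) ∧ permWord π i < permWord π (i - 1))
      ∨ (i = 1 ∧ permWord π 1 < permWord π 0))

/-- `i` is a right valley of `π` (1-based): `i ∈ {2,…,n}` and either `i` is a valley
(`i ≤ n-1` and `π_{i-1} > π_i < π_{i+1}`) or `i = n` and `π_{n-1} > π_n`. -/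
def IsRightValley {n : ℕ} (π : Equiv.Perm (Fin n)) (i : ℕ) : Prop :=
  2 ≤ i ∧ i ≤ n ∧
    ((i ≤ n - 1 ∧ permWord π (i - 1) < permWord π (i - 2) ∧ permWord π (i - 1) < permWord π i)
      ∨ (i = n ∧ permWord π (n - 1) < permWord π (n - 2)))

/-- The 1-based position of the value `p` in the one-line notation of `π`. -/
def posOf {n : ℕ} (π : Equiv.Perm (Fin n)) (p : ℕ) : ℕ := permWord π⁻¹ (p - 1)

/-- `w = φ(π)`, where `φ` is defined via the canonical decomposition `π = αβγ` (with
`α` increasing up to and including the left peak, `β` decreasing strictly between the left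
peak and the right valley, and `γ` increasing from the right valley on): the `p`-th letter
of `w` is `a`, `b`, or `c` according to whether the value `p` lies in `α`, `β`, or `γ`. -/
def IsPhi {n : ℕ} (π : Equiv.Perm (Fin n)) (w : List ABC) : Prop :=
  w.length = n ∧
  ∃ lp rv : ℕ, IsLeftPeak π lp ∧ IsRightValley π rv ∧
    ∀ p : ℕ, 1 ≤ p → p ≤ n →
      w[p - 1]? = some (if posOf π p ≤ lp then a else if posOf π p < rv then b else c)


/-! ### Auxiliary lemmas for `stmt13` -/

section Stmt13Aux

open ABC

variable {n : ℕ} {π : Equiv.Perm (Fin n)}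

lemma permWord_inj' {j k : ℕ} (hj : j < n) (hk : k < n)
    (h : permWord π j = permWord π k) : j = k := by
  simp only [permWord, dif_pos hj, dif_pos hk] at h
  have h2 : π ⟨j, hj⟩ = π ⟨k, hk⟩ := Fin.ext (by omega)
  simpa using congrArg Fin.val (π.injective h2)

lemma permWord_tri' {j k : ℕ} (hj : j < n) (hk : k < n) (hne : j ≠ k) :
    permWord π j < permWord π k ∨ permWord π k < permWord π j := by
  rcases Nat.lt_trichotomy (permWord π j) (permWord π k) with h | h | h
  · exact Or.inl h
  · exact absurd (permWord_inj' hj hk h) hne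
  · exact Or.inr h

lemma posOf_bounds' {p : ℕ} (h1 : 1 ≤ p) (h2 : p ≤ n) :
    1 ≤ posOf π p ∧ posOf π p ≤ n := by
  unfold posOf permWord
  rw [dif_pos (by omega : p - 1 < n)]
  exact ⟨by omega, Nat.succ_le_of_lt (Fin.is_lt _)⟩

lemma permWord_posOf' {p : ℕ} (h1 : 1 ≤ p) (h2 : p ≤ n) :
    permWord π (posOf π p - 1) = p := by
  unfold posOf permWord
  rw [dif_pos (by omega : p - 1 < n)]
  simp only [Nat.add_sub_cancel]
  rw [dif_pos (Fin.is_lt _)]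
  have e : (⟨((π⁻¹ ⟨p - 1, by omega⟩ : Fin n) : ℕ), Fin.is_lt _⟩ : Fin n)
      = π⁻¹ ⟨p - 1, by omega⟩ := Fin.ext rfl
  rw [e, ← Equiv.Perm.mul_apply, mul_inv_cancel, Equiv.Perm.one_apply]
  simp; omega

lemma lp_unique' (hπ : lpkCount π = 1) {lp : ℕ} (hlp : IsLeftPeak π lp) :
    ∀ i, 1 ≤ i → i ≤ n - 1 →
      ((2 ≤ i ∧ permWord π (i - 2) < permWord π (i - 1) ∧ permWord π i < permWord π (i - 1))
        ∨ (i = 1 ∧ permWord π 1 < permWord π 0)) → i = lp := by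
  intro i h1 h2 h3
  unfold lpkCount at hπ
  obtain ⟨x, hx⟩ := Finset.card_eq_one.mp hπ
  obtain ⟨l1, l2, l3⟩ := hlp
  have hm1 : lp ∈ ({x} : Finset ℕ) := by
    rw [← hx]; exact Finset.mem_filter.mpr ⟨Finset.mem_Icc.mpr ⟨l1, l2⟩, l3⟩
  have hm2 : i ∈ ({x} : Finset ℕ) := by
    rw [← hx]; exact Finset.mem_filter.mpr ⟨Finset.mem_Icc.mpr ⟨h1, h2⟩, h3⟩
  simp only [Finset.mem_singleton] at hm1 hm2
  omega

/-- Main structural lemma: with a unique left peak `lp` and a right valley `rv`,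
`lp < rv` and a value `p` is followed by an inverse descent iff
`lp < posOf π p` and `posOf π (p+1) < rv`. -/
lemma key_lemma (hπ : lpkCount π = 1) {lp rv : ℕ}
    (hlp : IsLeftPeak π lp) (hrv : IsRightValley π rv) :
    lp < rv ∧ ∀ p, 1 ≤ p → p + 1 ≤ n →
      (posOf π (p+1) < posOf π p ↔ lp < posOf π p ∧ posOf π (p+1) < rv) := by
  obtain ⟨hl1, hl2, hl3⟩ := hlp
  obtain ⟨hr1, hr2, hr3⟩ := hrv
  have huniq := lp_unique' hπ ⟨hl1, hl2, hl3⟩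
  have hn2 : 2 ≤ n := by omega
  -- a peak at 0-based position t forces t + 1 = lp
  have peak_eq : ∀ t, 1 ≤ t → t + 2 ≤ n →
      permWord π (t-1) < permWord π t → permWord π (t+1) < permWord π t → t + 1 = lp := by
    intro t ht1 ht2 ha hd
    have e1 : t + 1 - 2 = t - 1 := by omega
    have e2 : t + 1 - 1 = t := by omega
    exact huniq (t+1) (by omega) (by omega)
      (Or.inl ⟨by omega, by rw [e1, e2]; exact ha, by rw [e2]; exact hd⟩)
  -- descent at the left peak
  have dlp : permWord π lp < permWord π (lp - 1) := by
    rcases hl3 with ⟨_, _, h⟩ | ⟨h, h'⟩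
    · exact h
    · rw [h]; simpa using h'
  -- descent just before the right valley
  have drv : permWord π (rv - 1) < permWord π (rv - 2) := by
    rcases hr3 with ⟨_, h, _⟩ | ⟨h, h'⟩
    · exact h
    · rw [h]; exact h'
  -- no descents strictly before position lp (0-based j with j + 2 ≤ lp is an ascent)
  have asc1 : ∀ j, j + 2 ≤ lp → permWord π j < permWord π (j+1) := by
    intro j
    induction j using Nat.strong_induction_on with
    | _ j ih =>
      intro hj
      have hjn : j + 2 ≤ n := by omega
      by_contra hcon
      have hd : permWord π (j+1) < permWord π j := by
        rcases permWord_tri' (by omega : j < n) (by omega : j + 1 < n) (by omega) with h | h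
        · exact absurd h hcon
        · exact h
      rcases Nat.eq_zero_or_pos j with rfl | hj0
      · have := huniq 1 (by omega) (by omega) (Or.inr ⟨rfl, by simpa using hd⟩)
        omega
      · have ha := ih (j-1) (by omega) (by omega)
        have e : j - 1 + 1 = j := by omega
        rw [e] at ha
        have := peak_eq j hj0 hjn (ha) hd
        omega
  have hlprv : lp < rv := by
    by_contra hcon
    have ha := asc1 (rv - 2) (by omega)
    have e : rv - 2 + 1 = rv - 1 := by omega
    rw [e] at ha
    omega
  -- descents throughout [lp, rv-1] (0-based j with lp-1 ≤ j, j+2 ≤ rv)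
  have descI : ∀ d j, lp - 1 ≤ j → j + 2 + d = rv → permWord π (j+1) < permWord π j := by
    intro d
    induction d with
    | zero =>
      intro j h1 h2
      have e1 : j + 1 = rv - 1 := by omega
      have e2 : j = rv - 2 := by omega
      rw [e1, e2]; exact drv
    | succ d ih =>
      intro j h1 h2
      have hd1 : permWord π (j+2) < permWord π (j+1) := by
        have := ih (j+1) (by omega) (by omega)
        have e : j + 1 + 1 = j + 2 := by omega
        rwa [e] at this
      by_contra hcon
      have ha : permWord π j < permWord π (j+1) := by
        rcases permWord_tri' (by omega : j < n) (by omega : j + 1 < n) (by omega) with h | h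
        · exact h
        · exact absurd h hcon
      have := peak_eq (j+1) (by omega) (by omega)
        ha hd1
      omega
  have desc : ∀ j, lp - 1 ≤ j → j + 2 ≤ rv → permWord π (j+1) < permWord π j :=
    fun j h1 h2 => descI (rv - (j+2)) j h1 (by omega)
  -- no descents from position rv on (0-based j with rv - 1 ≤ j is an ascent)
  have asc2 : ∀ j, rv - 1 ≤ j → j + 2 ≤ n → permWord π j < permWord π (j+1) := by
    intro j
    induction j using Nat.strong_induction_on with
    | _ j ih =>
      intro hj1 hj2
      by_contra hcon
      have hd : permWord π (j+1) < permWord π j := by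
        rcases permWord_tri' (by omega : j < n) (by omega : j + 1 < n) (by omega) with h | h
        · exact absurd h hcon
        · exact h
      rcases Nat.lt_or_ge j rv with hlt | hge
      · -- j = rv - 1, but there is an ascent at rv - 1
        have hj : j = rv - 1 := by omega
        rcases hr3 with ⟨_, _, h⟩ | ⟨h, _⟩
        · have e : rv - 1 + 1 = rv := by omega
          rw [hj] at hd; rw [e] at hd; omega
        · omega
      · have ha := ih (j-1) (by omega) (by omega) (by omega)
        have e : j - 1 + 1 = j := by omega
        rw [e] at ha
        have := peak_eq j (by omega) (by omega) ha hd
        omega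
  -- chained monotonicity
  have inc1 : ∀ k j, j < k → k + 1 ≤ lp → permWord π j < permWord π k := by
    intro k
    induction k with
    | zero => intro j h; omega
    | succ k ih =>
      intro j hjk hk
      rcases Nat.lt_or_ge j k with h | h
      · exact (ih j h (by omega)).trans (asc1 k (by omega))
      · have : j = k := by omega
        subst this
        exact asc1 j (by omega)
  have decm : ∀ k j, lp - 1 ≤ j → j < k → k ≤ rv - 1 → permWord π k < permWord π j := by
    intro k
    induction k with
    | zero => intro j _ h; omega
    | succ k ih =>
      intro j h1 h2 h3
      have hdk : permWord π (k+1) < permWord π k := desc k (by omega) (by omega)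
      rcases Nat.lt_or_ge j k with h | h
      · exact hdk.trans (ih j h1 h (by omega))
      · have : j = k := by omega
        subst this
        exact hdk
  have inc2 : ∀ k j, rv - 1 ≤ j → j < k → k < n → permWord π j < permWord π k := by
    intro k
    induction k with
    | zero => intro j _ h; omega
    | succ k ih =>
      intro j h1 h2 h3
      rcases Nat.lt_or_ge j k with h | h
      · exact (ih j h1 h (by omega)).trans (asc2 k (by omega) (by omega))
      · have : j = k := by omega
        subst this
        exact asc2 j (by omega) (by omega)
  refine ⟨hlprv, ?_⟩
  intro p hp1 hp2
  obtain ⟨hq1, hq2⟩ := posOf_bounds' (π := π) hp1 (by omega : p ≤ n)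
  obtain ⟨hq'1, hq'2⟩ := posOf_bounds' (π := π) (by omega : 1 ≤ p + 1) hp2
  have hv : permWord π (posOf π p - 1) = p := permWord_posOf' hp1 (by omega)
  have hv' : permWord π (posOf π (p+1) - 1) = p + 1 := permWord_posOf' (by omega) hp2
  set q := posOf π p with hqdef
  set q' := posOf π (p+1) with hq'def
  have hne : q ≠ q' := by
    intro h
    rw [h, hv'] at hv
    omega
  constructor
  · intro hlt
    constructor
    · by_contra h
      push_neg at h
      have := inc1 (q - 1) (q' - 1) (by omega) (by omega)
      rw [hv, hv'] at this
      omega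
    · by_contra h
      push_neg at h
      have := inc2 (q - 1) (q' - 1) (by omega) (by omega) (by omega)
      rw [hv, hv'] at this
      omega
  · rintro ⟨h1, h2⟩
    by_contra hge
    push_neg at hge
    have := decm (q' - 1) (q - 1) (by omega) (by omega) (by omega)
    rw [hv, hv'] at this
    omega

lemma infix3_iff (x y z : ABC) (w : List ABC) :
    [x, y, z] <:+: w ↔ ∃ k, w[k]? = some x ∧ w[k+1]? = some y ∧ w[k+2]? = some z := by
  constructor
  · rintro ⟨s, t, rfl⟩
    refine ⟨s.length, ?_, ?_, ?_⟩ <;>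
      rw [List.append_assoc, List.getElem?_append_right (by omega)] <;> simp
  · rintro ⟨k, hx, hy, hz⟩
    obtain ⟨hklt, hxe⟩ := getElem?_eq_some_iff.mp hx
    obtain ⟨hklt1, hye⟩ := getElem?_eq_some_iff.mp hy
    obtain ⟨hklt2, hze⟩ := getElem?_eq_some_iff.mp hz
    refine ⟨w.take k, w.drop (k+3), ?_⟩
    have e1 : w.drop k = x :: w.drop (k+1) := by
      rw [List.drop_eq_getElem_cons hklt, hxe]
    have e2 : w.drop (k+1) = y :: w.drop (k+2) := by
      rw [List.drop_eq_getElem_cons hklt1, hye]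
    have e3 : w.drop (k+2) = z :: w.drop (k+3) := by
      rw [List.drop_eq_getElem_cons hklt2, hze]
    conv_rhs => rw [← List.take_append_drop k w, e1, e2, e3]
    simp

end Stmt13Aux

/-- The letter of `φ(π)` at value `p`, given left peak `lp` and right valley `rv`. -/
def phiL {n : ℕ} (π : Equiv.Perm (Fin n)) (lp rv p : ℕ) : ABC :=
  if posOf π p ≤ lp then ABC.a else if posOf π p < rv then ABC.b else ABC.c

section Stmt13Aux2
open ABC
variable {n : ℕ} {π : Equiv.Perm (Fin n)} {lp rv : ℕ}

lemma phiL_bc (p : ℕ) : (phiL π lp rv p = b ∨ phiL π lp rv p = c) ↔ lp < posOf π p := by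
  unfold phiL; split_ifs with h1 h2 <;> simp <;> omega

lemma phiL_ab (hlprv : lp < rv) (p : ℕ) :
    (phiL π lp rv p = a ∨ phiL π lp rv p = b) ↔ posOf π p < rv := by
  unfold phiL; split_ifs with h1 h2 <;> simp <;> omega

lemma phiL_b (p : ℕ) : phiL π lp rv p = b ↔ (lp < posOf π p ∧ posOf π p < rv) := by
  unfold phiL; split_ifs with h1 h2 <;> simp <;> omega

end Stmt13Aux2

/-- **Lemma 10 (Troyka–Zhuang).** Let `π ∈ N_n` (exactly one left peak). Then `π⁻¹` avoids
`321` as a consecutive pattern if and only if `φ(π)` avoids the subwords `bba`, `bbb`,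
`cba`, `cbb`. (Here `φ(π)` is encoded relationally by `IsPhi`.) -/
theorem stmt13 (n : ℕ) (π : Equiv.Perm (Fin n)) (hπ : lpkCount π = 1)
    (w : List ABC) (hw : IsPhi π w) :
    ¬ ContainsPat π⁻¹ (Fin.revPerm : Equiv.Perm (Fin 3)) ↔
      (¬ [b, b, a] <:+: w ∧ ¬ [b, b, b] <:+: w ∧ ¬ [c, b, a] <:+: w ∧ ¬ [c, b, b] <:+: w) := by
  obtain ⟨hwlen, lp, rv, hlp, hrv, hwp0⟩ := hw
  obtain ⟨hlprv, hkey⟩ := key_lemma hπ hlp hrv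
  have hwp : ∀ p, 1 ≤ p → p ≤ n → w[p-1]? = some (phiL π lp rv p) := hwp0
  clear hwp0
  -- inverse-pattern containment as a double descent of positions
  have hcontains : ContainsPat π⁻¹ (Fin.revPerm : Equiv.Perm (Fin 3)) ↔
      ∃ p, 1 ≤ p ∧ p + 2 ≤ n ∧ posOf π (p+1) < posOf π p ∧ posOf π (p+2) < posOf π (p+1) := by
    constructor
    · rintro ⟨i, hi, h⟩
      refine ⟨i + 1, by omega, by omega, ?_, ?_⟩
      · have h10 := (h 1 0).mpr (by decide)
        simp only [posOf]
        rw [show i + 1 + 1 - 1 = i + 1 by omega, show i + 1 - 1 = i by omega]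
        simpa using h10
      · have h21 := (h 2 1).mpr (by decide)
        simp only [posOf]
        rw [show i + 1 + 2 - 1 = i + 2 by omega, show i + 1 + 1 - 1 = i + 1 by omega]
        simpa using h21
    · rintro ⟨p, hp1, hp2, hd1, hd2⟩
      simp only [posOf] at hd1 hd2
      rw [show p + 1 - 1 = p by omega] at hd1 hd2
      rw [show p + 2 - 1 = p + 1 by omega] at hd2
      have hu1 : permWord π⁻¹ (p - 1 + 1) < permWord π⁻¹ (p - 1) := by
        rwa [show p - 1 + 1 = p by omega]
      have hu2 : permWord π⁻¹ (p - 1 + 2) < permWord π⁻¹ (p - 1 + 1) := by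
        rw [show p - 1 + 2 = p + 1 by omega, show p - 1 + 1 = p by omega]; exact hd2
      refine ⟨p - 1, by omega, ?_⟩
      intro j k
      fin_cases j <;> fin_cases k <;>
        simp only [Fin.isValue, Fin.val_zero, Fin.val_one, Fin.val_two, Nat.add_zero] <;>
        constructor <;> intro h' <;>
          first
            | decide
            | omega
            | exact absurd h' (by decide)
  -- occurrences of 3-letter patterns in w
  have hocc : ∀ x y z : ABC, ([x, y, z] <:+: w ↔
      ∃ p, 1 ≤ p ∧ p + 2 ≤ n ∧
        phiL π lp rv p = x ∧ phiL π lp rv (p+1) = y ∧ phiL π lp rv (p+2) = z) := by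
    intro x y z
    rw [infix3_iff]
    constructor
    · rintro ⟨k, hx, hy, hz⟩
      have hk2 : k + 2 < n := by
        have := (getElem?_eq_some_iff.mp hz).1
        omega
      refine ⟨k + 1, by omega, by omega, ?_, ?_, ?_⟩
      · have h := hwp (k+1) (by omega) (by omega)
        rw [show k + 1 - 1 = k by omega, hx] at h
        exact (Option.some.inj h).symm
      · have h := hwp (k+2) (by omega) (by omega)
        rw [show k + 2 - 1 = k + 1 by omega, hy] at h
        exact (Option.some.inj h).symm
      · have h := hwp (k+3) (by omega) (by omega)
        rw [show k + 3 - 1 = k + 2 by omega, hz] at h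
        have e : k + 1 + 2 = k + 3 := by omega
        rw [e]
        exact (Option.some.inj h).symm
    · rintro ⟨p, hp1, hp2, e1, e2, e3⟩
      refine ⟨p - 1, ?_, ?_, ?_⟩
      · have h := hwp p hp1 (by omega)
        rw [h, e1]
      · have h := hwp (p+1) (by omega) (by omega)
        rw [show p + 1 - 1 = p by omega] at h
        rw [show p - 1 + 1 = p by omega, h, e2]
      · have h := hwp (p+2) (by omega) (by omega)
        rw [show p + 2 - 1 = p + 1 by omega] at h
        rw [show p - 1 + 2 = p + 1 by omega, h, e3]
  -- double descents correspond to the forbidden letter patterns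
  have hdd : ∀ p, 1 ≤ p → p + 2 ≤ n →
      ((posOf π (p+1) < posOf π p ∧ posOf π (p+2) < posOf π (p+1)) ↔
        ((phiL π lp rv p = b ∨ phiL π lp rv p = c) ∧ phiL π lp rv (p+1) = b ∧
          (phiL π lp rv (p+2) = a ∨ phiL π lp rv (p+2) = b))) := by
    intro p h1 h2
    have hk2 := hkey (p+1) (by omega) (by omega)
    rw [show p + 1 + 1 = p + 2 by omega] at hk2
    rw [hkey p h1 (by omega), hk2, phiL_bc, phiL_b, phiL_ab hlprv]
    tauto
  have main : ContainsPat π⁻¹ (Fin.revPerm : Equiv.Perm (Fin 3)) ↔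
      ([b,b,a] <:+: w ∨ [b,b,b] <:+: w ∨ [c,b,a] <:+: w ∨ [c,b,b] <:+: w) := by
    rw [hcontains, hocc b b a, hocc b b b, hocc c b a, hocc c b b]
    constructor
    · rintro ⟨p, h1, h2, hd⟩
      obtain ⟨hA, hB, hC⟩ := (hdd p h1 h2).mp hd
      rcases hA with hA | hA <;> rcases hC with hC | hC
      · exact Or.inl ⟨p, h1, h2, hA, hB, hC⟩
      · exact Or.inr (Or.inl ⟨p, h1, h2, hA, hB, hC⟩)
      · exact Or.inr (Or.inr (Or.inl ⟨p, h1, h2, hA, hB, hC⟩))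
      · exact Or.inr (Or.inr (Or.inr ⟨p, h1, h2, hA, hB, hC⟩))
    · rintro (⟨p,h1,h2,e1,e2,e3⟩ | ⟨p,h1,h2,e1,e2,e3⟩ | ⟨p,h1,h2,e1,e2,e3⟩ | ⟨p,h1,h2,e1,e2,e3⟩)
      · exact ⟨p, h1, h2, (hdd p h1 h2).mpr ⟨Or.inl e1, e2, Or.inl e3⟩⟩
      · exact ⟨p, h1, h2, (hdd p h1 h2).mpr ⟨Or.inl e1, e2, Or.inr e3⟩⟩
      · exact ⟨p, h1, h2, (hdd p h1 h2).mpr ⟨Or.inr e1, e2, Or.inl e3⟩⟩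
      · exact ⟨p, h1, h2, (hdd p h1 h2).mpr ⟨Or.inr e1, e2, Or.inr e3⟩⟩
  rw [main]
  tauto
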